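/- For the free transport flow on the torus 𝕋^d: given any time τ > 0 and any x₀ ∈ 𝕋^d, there exist β, R̃ > 0 such that for all t ≥ τ, ∫_{B(0,R̃)} T_t(δ_{x₀}(x) 𝟙_{B(0,β)}(v)) dv ≥ τ^{−d}, i.e. the free transport of a Dirac in position with uniformly bounded velocities spreads a positive density over all of 𝕋^d. -/

import Mathlib

open MeasureTheory Real
open scoped ENNReal

lemma aux_circle_nat (n : ℕ) :
    Measure.map ((↑) : ℝ → AddCircle (1:ℝ)) (volume.restrict (Set.Ioc 0 (n : ℝ)))
      = (n : ℝ≥0∞) • (volume : Measure (AddCircle (1:ℝ))) := by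
  have hmk : Measurable ((↑) : ℝ → AddCircle (1:ℝ)) :=
    (AddCircle.measurePreserving_mk 1 0).measurable
  induction n with
  | zero => simp
  | succ m ih =>
    have hm0 : (0:ℝ) ≤ (m:ℝ) := Nat.cast_nonneg m
    have hcast : ((m + 1 : ℕ) : ℝ) = (m : ℝ) + 1 := by push_cast; ring
    rw [hcast, ← Set.Ioc_union_Ioc_eq_Ioc hm0 (by linarith : (m:ℝ) ≤ (m:ℝ) + 1),
      Measure.restrict_union (Set.Ioc_disjoint_Ioc_of_le le_rfl) measurableSet_Ioc,
      Measure.map_add _ _ hmk, ih, (AddCircle.measurePreserving_mk 1 (m : ℝ)).map_eq]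
    push_cast
    rw [add_smul, one_smul]

lemma aux_circle (t : ℝ) (ht : 0 < t) (n : ℕ) :
    Measure.map (fun x : ℝ => ((t * x : ℝ) : AddCircle (1:ℝ)))
      (volume.restrict (Set.Ioc 0 ((n : ℝ) / t)))
    = ENNReal.ofReal ((n : ℝ) / t) • (volume : Measure (AddCircle (1:ℝ))) := by
  have hmk : Measurable ((↑) : ℝ → AddCircle (1:ℝ)) :=
    (AddCircle.measurePreserving_mk 1 0).measurable
  have hcomp : (fun x : ℝ => ((t * x : ℝ) : AddCircle (1:ℝ)))
      = ((↑) : ℝ → AddCircle (1:ℝ)) ∘ (fun x : ℝ => t * x) := rfl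
  have hpre : (fun x : ℝ => t * x) ⁻¹' (Set.Ioc 0 (n : ℝ)) = Set.Ioc 0 ((n : ℝ) / t) := by
    ext x
    simp only [Set.mem_preimage, Set.mem_Ioc]
    constructor
    · rintro ⟨h1, h2⟩
      refine ⟨by nlinarith, ?_⟩
      rw [le_div_iff₀ ht]; nlinarith
    · rintro ⟨h1, h2⟩
      rw [le_div_iff₀ ht] at h2
      exact ⟨mul_pos ht h1, by nlinarith⟩
  have hmul : Measure.map (fun x : ℝ => t * x) (volume.restrict (Set.Ioc 0 ((n : ℝ) / t)))
      = ENNReal.ofReal t⁻¹ • volume.restrict (Set.Ioc 0 (n : ℝ)) := by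
    rw [← hpre, ← Measure.restrict_map (measurable_const_mul t) measurableSet_Ioc,
      Real.map_volume_mul_left (ne_of_gt ht), abs_of_pos (inv_pos.mpr ht),
      Measure.restrict_smul]
  have hn := aux_circle_nat n
  rw [hcomp, ← Measure.map_map hmk (measurable_const_mul t), hmul, Measure.map_smul, hn,
    smul_smul]
  congr 1
  rw [← ENNReal.ofReal_natCast n, ← ENNReal.ofReal_mul (by positivity), inv_mul_eq_div]

lemma aux_pi_restrict {d : ℕ} (a : ℝ) :
    (volume : Measure (Fin d → ℝ)).restrict (Set.univ.pi fun _ => Set.Ioc 0 a)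
      = Measure.pi (fun _ : Fin d => volume.restrict (Set.Ioc 0 a)) := by
  refine (Measure.pi_eq (μ := fun _ : Fin d => volume.restrict (Set.Ioc 0 a)) fun s hs => ?_).symm
  rw [Measure.restrict_apply (MeasurableSet.univ_pi hs), ← Set.pi_inter_distrib, volume_pi_pi]
  exact Finset.prod_congr rfl fun i _ => (Measure.restrict_apply (hs i)).symm

lemma aux_sigmaFinite_smul (c : ℝ≥0∞) (hc : c ≠ ∞) :
    SigmaFinite (c • (volume : Measure (AddCircle (1:ℝ)))) := by
  have h : IsFiniteMeasure (c • (volume : Measure (AddCircle (1:ℝ)))) := by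
    constructor
    rw [Measure.smul_apply, smul_eq_mul]
    exact ENNReal.mul_lt_top hc.lt_top (measure_lt_top _ _)
  exact h.toSigmaFinite

lemma aux_pi_smul {d : ℕ} (c : ℝ≥0∞) (hc : c ≠ ∞) :
    Measure.pi (fun _ : Fin d => c • (volume : Measure (AddCircle (1:ℝ))))
      = c ^ d • Measure.pi (fun _ : Fin d => (volume : Measure (AddCircle (1:ℝ)))) := by
  haveI : SigmaFinite (c • (volume : Measure (AddCircle (1:ℝ)))) := aux_sigmaFinite_smul c hc
  refine Measure.pi_eq (μ := fun _ : Fin d => c • (volume : Measure (AddCircle (1:ℝ)))) fun s hs => ?_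
  simp only [Measure.smul_apply, smul_eq_mul, Measure.pi_pi]
  rw [Finset.prod_mul_distrib, Finset.prod_const, Finset.card_univ, Fintype.card_fin]

lemma aux_key_pi {d : ℕ} (t : ℝ) (ht : 0 < t) (n : ℕ) :
    Measure.map (fun (v : Fin d → ℝ) (i : Fin d) => ((t * v i : ℝ) : AddCircle (1:ℝ)))
      ((volume : Measure (Fin d → ℝ)).restrict (Set.univ.pi fun _ => Set.Ioc 0 ((n:ℝ)/t)))
    = (ENNReal.ofReal ((n:ℝ)/t)) ^ d • (volume : Measure (Fin d → AddCircle (1:ℝ))) := by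
  haveI : SigmaFinite (ENNReal.ofReal ((n:ℝ)/t) • (volume : Measure (AddCircle (1:ℝ)))) :=
    aux_sigmaFinite_smul _ ENNReal.ofReal_ne_top
  have hcoord : ∀ _i : Fin d, MeasurePreserving (fun x : ℝ => ((t * x : ℝ) : AddCircle (1:ℝ)))
      (volume.restrict (Set.Ioc 0 ((n:ℝ)/t)))
      (ENNReal.ofReal ((n:ℝ)/t) • (volume : Measure (AddCircle (1:ℝ)))) := by
    intro _
    refine ⟨?_, aux_circle t ht n⟩
    exact ((AddCircle.measurePreserving_mk 1 0).measurable).comp (measurable_const_mul t)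
  rw [aux_pi_restrict, (measurePreserving_pi (fun _ : Fin d => volume.restrict (Set.Ioc 0 ((n:ℝ)/t)))
      (fun _ : Fin d => ENNReal.ofReal ((n:ℝ)/t) • (volume : Measure (AddCircle (1:ℝ)))) hcoord).map_eq, aux_pi_smul _ ENNReal.ofReal_ne_top,
    ← volume_pi]

/-- On the torus `𝕋^d = (ℝ/ℤ)^d`, given any `τ > 0` and any
`x₀ ∈ 𝕋^d`, there exist `β, R̃ > 0` such that for all `t ≥ τ`, the position marginal of
the free transport at time `t` of the measure `δ_{x₀}(dx) 𝟙_{B(0,β)}(v) dv`, restricted to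
velocities in `B(0,R̃)`, has density at least `τ^{−d}` with respect to the (unit-mass)
Lebesgue measure on `𝕋^d`. -/
theorem torus_transport_spreading
    {d : ℕ} (hd : 0 < d) (τ : ℝ) (hτ : 0 < τ)
    (x₀ : Fin d → AddCircle (1 : ℝ)) :
    ∃ β : ℝ, 0 < β ∧ ∃ Rt : ℝ, 0 < Rt ∧
      ∀ t : ℝ, τ ≤ t →
        (ENNReal.ofReal (τ ^ (-(d : ℝ))))
            • (volume : Measure (Fin d → AddCircle (1 : ℝ)))
          ≤ Measure.map Prod.fst
              ((Measure.map
                  (fun p : (Fin d → AddCircle (1 : ℝ)) × EuclideanSpace ℝ (Fin d) =>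
                    (p.1 + fun i => ((t * p.2 i : ℝ) : AddCircle (1 : ℝ)), p.2))
                  ((Measure.dirac x₀).prod
                    ((volume : Measure (EuclideanSpace ℝ (Fin d))).restrict
                      (Metric.ball 0 β)))).restrict
                ((Set.univ : Set (Fin d → AddCircle (1 : ℝ))) ×ˢ Metric.ball 0 Rt)) := by
  classical
  set β : ℝ := 2 * Real.sqrt d / τ + 1 with hβdef
  have hβ : 0 < β := by positivity
  refine ⟨β, hβ, β, hβ, fun t htτ => ?_⟩
  have ht0 : 0 < t := lt_of_lt_of_le hτ htτ
  set n : ℕ := ⌈t / τ⌉₊ with hndef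
  set a : ℝ := (n : ℝ) / t with hadef
  have hta : t / τ ≤ (n : ℝ) := Nat.le_ceil _
  have ha1 : τ⁻¹ ≤ a := by
    have h := (div_le_div_iff_of_pos_right ht0).mpr hta
    have he' : t / τ / t = τ⁻¹ := by field_simp
    rw [he'] at h
    exact h
  have ha0 : 0 < a := lt_of_lt_of_le (inv_pos.mpr hτ) ha1
  have ha2 : a ≤ 2 / τ := by
    have h1 : (n : ℝ) < t / τ + 1 := Nat.ceil_lt_add_one (by positivity)
    have h2 : a ≤ (t / τ + 1) / t := by
      rw [hadef]
      exact (div_le_div_iff_of_pos_right ht0).mpr h1.le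
    have h3 : (t / τ + 1) / t = 1 / τ + 1 / t := by field_simp
    have h4 : 1 / t ≤ 1 / τ := one_div_le_one_div_of_le hτ htτ
    rw [h3] at h2
    calc a ≤ 1 / τ + 1 / t := h2
      _ ≤ 1 / τ + 1 / τ := by linarith
      _ = 2 / τ := by ring
  -- abbreviations
  set E := EuclideanSpace ℝ (Fin d) with hEdef
  have hmkM : Measurable ((↑) : ℝ → AddCircle (1:ℝ)) :=
    (AddCircle.measurePreserving_mk 1 0).measurable
  set e : E ≃ᵐ (Fin d → ℝ) := (MeasurableEquiv.toLp 2 (Fin d → ℝ)).symm with hedef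
  have he := EuclideanSpace.volume_preserving_symm_measurableEquiv_toLp (Fin d)
  set g : (Fin d → ℝ) → (Fin d → AddCircle (1:ℝ)) := fun v i => ((t * v i : ℝ) : AddCircle (1:ℝ))
    with hgdef
  have hg : Measurable g :=
    measurable_pi_iff.mpr fun i => hmkM.comp ((measurable_const_mul t).comp (measurable_pi_apply i))
  set gE : E → (Fin d → AddCircle (1:ℝ)) := fun v i => ((t * v i : ℝ) : AddCircle (1:ℝ))
    with hgEdef
  have hgE : Measurable gE := hg.comp e.measurable
  set S : Set (Fin d → ℝ) := Set.univ.pi fun _ => Set.Ioc 0 a with hSdef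
  have hSmeas : MeasurableSet S := MeasurableSet.univ_pi fun _ => measurableSet_Ioc
  set SE : Set E := ⇑e ⁻¹' S with hSEdef
  -- SE is inside the ball of radius β
  have hSβ : SE ⊆ Metric.ball (0 : E) β := by
    intro v hv
    have hvi : ∀ i, v i ∈ Set.Ioc 0 a := fun i => hv i (Set.mem_univ i)
    have hbound : ∀ i : Fin d, ‖v i‖ ≤ 2 / τ := by
      intro i
      rw [Real.norm_eq_abs, abs_of_pos (hvi i).1]
      exact le_trans (hvi i).2 ha2
    rw [Metric.mem_ball, dist_zero_right]
    have hnorm : ‖v‖ = Real.sqrt (∑ i, ‖v i‖ ^ 2) := by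
      rw [EuclideanSpace.norm_eq]
    rw [hnorm]
    have hc1 : (∑ i, ‖v i‖ ^ 2) ≤ ∑ _i : Fin d, (2 / τ) ^ 2 :=
      Finset.sum_le_sum fun i _ => pow_le_pow_left₀ (norm_nonneg _) (hbound i) 2
    have hc2 : (∑ _i : Fin d, (2 / τ) ^ 2) = (d : ℝ) * (2 / τ) ^ 2 := by
      rw [Finset.sum_const, Finset.card_univ, Fintype.card_fin, nsmul_eq_mul]
    calc Real.sqrt (∑ i, ‖v i‖ ^ 2) ≤ Real.sqrt ((d : ℝ) * (2 / τ) ^ 2) := by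
          apply Real.sqrt_le_sqrt; rw [← hc2]; exact hc1
      _ = Real.sqrt d * (2 / τ) := by
          rw [Real.sqrt_mul (Nat.cast_nonneg d), Real.sqrt_sq (by positivity)]
      _ < β := by
          rw [hβdef]
          have : Real.sqrt d * (2 / τ) = 2 * Real.sqrt d / τ := by ring
          rw [this]
          linarith
  set ν : Measure E := (volume : Measure E).restrict (Metric.ball 0 β) with hνdef
  set f : (Fin d → AddCircle (1:ℝ)) × E → (Fin d → AddCircle (1:ℝ)) × E :=
    fun p => (p.1 + fun i => ((t * p.2 i : ℝ) : AddCircle (1:ℝ)), p.2) with hfdef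
  have hf : Measurable f :=
    ((measurable_fst.add (hgE.comp measurable_snd)).prodMk measurable_snd)
  -- Step A : restriction is a no-op
  have hA : (Measure.map f ((Measure.dirac x₀).prod ν)).restrict
      ((Set.univ : Set (Fin d → AddCircle (1:ℝ))) ×ˢ Metric.ball 0 β)
      = Measure.map f ((Measure.dirac x₀).prod ν) := by
    apply Measure.restrict_eq_self_of_ae_mem
    rw [ae_iff]
    show Measure.map f ((Measure.dirac x₀).prod ν)
        (((Set.univ : Set (Fin d → AddCircle (1:ℝ))) ×ˢ Metric.ball 0 β)ᶜ) = 0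
    rw [Measure.map_apply hf (MeasurableSet.univ.prod measurableSet_ball).compl]
    have hpre : f ⁻¹' (((Set.univ : Set (Fin d → AddCircle (1:ℝ))) ×ˢ Metric.ball 0 β)ᶜ)
        = (Set.univ : Set (Fin d → AddCircle (1:ℝ))) ×ˢ (Metric.ball (0:E) β)ᶜ := by
      ext p
      simp [hfdef, Set.mem_prod]
    rw [hpre, Measure.prod_prod]
    have hν0 : ν ((Metric.ball (0:E) β)ᶜ) = 0 := by
      rw [hνdef, Measure.restrict_apply measurableSet_ball.compl]
      simp
    rw [hν0, mul_zero]
  -- Step B/C : compute the first marginal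
  have hPf : Measurable (Prod.fst ∘ f) := measurable_fst.add (hgE.comp measurable_snd)
  have hBC : Measure.map Prod.fst (Measure.map f ((Measure.dirac x₀).prod ν))
      = Measure.map (fun v : E => x₀ + gE v) ν := by
    rw [Measure.map_map measurable_fst hf, Measure.dirac_prod,
      Measure.map_map hPf measurable_prodMk_left]
    rfl
  -- Step E : exact computation on SE
  have h1 : (volume : Measure (Fin d → ℝ)).restrict S
      = Measure.map (⇑e) ((volume : Measure E).restrict SE) := by
    rw [← he.map_eq]
    exact e.restrict_map volume S
  have h2 : Measure.map gE ((volume : Measure E).restrict SE)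
      = (ENNReal.ofReal a) ^ d • (volume : Measure (Fin d → AddCircle (1:ℝ))) := by
    have hk : Measure.map g ((volume : Measure (Fin d → ℝ)).restrict S)
        = (ENNReal.ofReal a) ^ d • (volume : Measure (Fin d → AddCircle (1:ℝ))) :=
      aux_key_pi t ht0 n
    rw [h1, Measure.map_map hg e.measurable] at hk
    exact hk
  have h3 : Measure.map (fun v : E => x₀ + gE v) ((volume : Measure E).restrict SE)
      = (ENNReal.ofReal a) ^ d • (volume : Measure (Fin d → AddCircle (1:ℝ))) := by
    have hc : (fun v : E => x₀ + gE v) = (fun y => x₀ + y) ∘ gE := rfl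
    rw [hc, ← Measure.map_map (measurable_const_add x₀) hgE, h2, Measure.map_smul,
      MeasureTheory.map_add_left_eq_self]
  -- smul comparison
  have hsm : ENNReal.ofReal (τ ^ (-(d:ℝ))) ≤ (ENNReal.ofReal a) ^ d := by
    have hr : τ ^ (-(d:ℝ)) = (τ⁻¹) ^ d := by
      rw [Real.rpow_neg hτ.le, Real.rpow_natCast, inv_pow]
    rw [hr, ENNReal.ofReal_pow (inv_nonneg.mpr hτ.le)]
    exact pow_le_pow_left₀ zero_le (ENNReal.ofReal_le_ofReal ha1) d
  -- conclusion
  rw [hA, hBC]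
  calc ENNReal.ofReal (τ ^ (-(d:ℝ))) • (volume : Measure (Fin d → AddCircle (1:ℝ)))
      ≤ (ENNReal.ofReal a) ^ d • (volume : Measure (Fin d → AddCircle (1:ℝ))) := by
        refine Measure.le_iff.mpr fun s hs => ?_
        simp only [Measure.smul_apply, smul_eq_mul]
        exact mul_le_mul_of_nonneg_right hsm zero_le
    _ = Measure.map (fun v : E => x₀ + gE v) ((volume : Measure E).restrict SE) := h3.symm
    _ ≤ Measure.map (fun v : E => x₀ + gE v) ν :=
        Measure.map_mono (Measure.restrict_mono hSβ le_rfl)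
          ((measurable_const_add x₀).comp hgE)
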